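/- Under the hypotheses of the previous statement (structure constants [k; i j] ≥ 0 fully symmetric with ∑_{j,k}[k; i j] = dᵢ(1−2c), dᵢ > 0, and 3/10 < c ≤ 1/2), the symmetric matrix F with fᵢᵢ = ((6c−1)/4)dᵢ + (1/2)∑ⱼ[j; i i] and fᵢⱼ = (1/2)∑ₖ[k; i j] (i ≠ j) is positive definite. -/

import Mathlib

theorem stmt_16 (q : ℕ) (hq : 1 ≤ q) (d : Fin q → ℝ) (hd : ∀ i, 0 < d i)
    (c : ℝ) (hc : c ≤ 1/2) (hc' : 3/10 < c)
    (T : Fin q → Fin q → Fin q → ℝ)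
    (hnn : ∀ i j k, 0 ≤ T k i j)
    (hsym₁ : ∀ i j k, T k i j = T k j i)
    (hsym₂ : ∀ i j k, T k i j = T j i k)
    (hWZ : ∀ i, ∑ j, ∑ k, T k i j = d i * (1 - 2*c))
    (F : Matrix (Fin q) (Fin q) ℝ)
    (hdiag : ∀ i, F i i = ((6*c - 1)/4) * d i + (1/2) * ∑ j, T j i i)
    (hoff : ∀ i j, i ≠ j → F i j = (1/2) * ∑ k, T k i j) :
    F.PosDef := by
  -- A = symmetric nonnegative part
  set A : Fin q → Fin q → ℝ := fun i j => (1/2) * ∑ k, T k i j with hA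
  have hAnn : ∀ i j, 0 ≤ A i j := fun i j =>
    mul_nonneg (by norm_num) (Finset.sum_nonneg fun k _ => hnn i j k)
  have hAsym : ∀ i j, A i j = A j i := fun i j => by
    simp only [hA]
    congr 1
    exact Finset.sum_congr rfl fun k _ => hsym₁ i j k
  have hArow : ∀ i, ∑ j, A i j = (1/2) * (d i * (1 - 2*c)) := fun i => by
    simp only [hA, ← Finset.mul_sum, hWZ i]
  have hF : ∀ i j, F i j = (if i = j then ((6*c-1)/4) * d i else 0) + A i j := by
    intro i j
    by_cases h : i = j
    · subst h; simp [hdiag i, hA]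
    · simp [h, hoff i j h, hA]
  refine Matrix.posDef_iff_dotProduct_mulVec.mpr ⟨?_, ?_⟩
  · ext i j
    simp only [Matrix.conjTranspose_apply, RCLike.star_def, starRingEnd_apply, star_trivial]
    rw [hF, hF, hAsym j i]
    by_cases h : i = j
    · subst h; rfl
    · simp [h, Ne.symm h]
  · intro x hx
    have expand : ∀ i, x i * ∑ j, F i j * x j
        = ((6*c-1)/4) * d i * (x i)^2 + ∑ j, A i j * (x i * x j) := by
      intro i
      simp only [hF, add_mul, Finset.sum_add_distrib, mul_add, Finset.mul_sum]
      congr 1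
      · rw [Finset.sum_eq_single i]
        · simp; ring
        · intro b _ hb; simp [Ne.symm hb]
        · intro h; simp at h
      · exact Finset.sum_congr rfl fun j _ => by ring
    have hlb : ∀ i j, A i j * (x i * x j) ≥ -(A i j * ((x i)^2 + (x j)^2) / 2) := by
      intro i j
      nlinarith [hAnn i j, sq_nonneg (x i + x j)]
    have hsum2 : ∑ i, ∑ j, A i j * ((x i)^2 + (x j)^2) / 2
        = ∑ i, (1/2) * (d i * (1 - 2*c)) * (x i)^2 := by
      have h1 : ∑ i, ∑ j, A i j * (x j)^2 = ∑ i, ∑ j, A i j * (x i)^2 := by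
        rw [Finset.sum_comm]
        exact Finset.sum_congr rfl fun i _ => Finset.sum_congr rfl fun j _ => by
          rw [hAsym j i]
      have : ∀ i, ∑ j, A i j * (x i)^2 = (1/2) * (d i * (1 - 2*c)) * (x i)^2 := by
        intro i
        rw [← Finset.sum_mul, hArow i]
      calc ∑ i, ∑ j, A i j * ((x i)^2 + (x j)^2) / 2
          = ∑ i, ∑ j, (A i j * (x i)^2 / 2 + A i j * (x j)^2 / 2) :=
            Finset.sum_congr rfl fun i _ => Finset.sum_congr rfl fun j _ => by ring
        _ = (∑ i, ∑ j, A i j * (x i)^2) / 2 + (∑ i, ∑ j, A i j * (x j)^2) / 2 := by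
            simp [Finset.sum_add_distrib, Finset.sum_div]
        _ = ∑ i, ∑ j, A i j * (x i)^2 := by rw [h1]; ring
        _ = ∑ i, (1/2) * (d i * (1 - 2*c)) * (x i)^2 :=
            Finset.sum_congr rfl fun i _ => this i
    have main : ∑ i, x i * ∑ j, F i j * x j ≥ ∑ i, ((10*c-3)/4) * d i * (x i)^2 := by
      calc ∑ i, x i * ∑ j, F i j * x j
          = ∑ i, ((6*c-1)/4) * d i * (x i)^2 + ∑ i, ∑ j, A i j * (x i * x j) := by
            rw [← Finset.sum_add_distrib]
            exact Finset.sum_congr rfl fun i _ => expand i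
        _ ≥ ∑ i, ((6*c-1)/4) * d i * (x i)^2
              - ∑ i, ∑ j, A i j * ((x i)^2 + (x j)^2) / 2 := by
            have : ∑ i, ∑ j, A i j * (x i * x j)
                ≥ -(∑ i, ∑ j, A i j * ((x i)^2 + (x j)^2) / 2) := by
              rw [← Finset.sum_neg_distrib]
              refine Finset.sum_le_sum fun i _ => ?_
              rw [← Finset.sum_neg_distrib]
              exact Finset.sum_le_sum fun j _ => hlb i j
            linarith
        _ = ∑ i, ((10*c-3)/4) * d i * (x i)^2 := by
            rw [hsum2, ← Finset.sum_sub_distrib]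
            exact Finset.sum_congr rfl fun i _ => by ring
    have hpos : 0 < ∑ i, ((10*c-3)/4) * d i * (x i)^2 := by
      obtain ⟨i0, hi0⟩ := Function.ne_iff.mp hx
      have h1 : 0 < (10*c-3)/4 := by linarith
      refine Finset.sum_pos' (fun i _ => ?_) ⟨i0, Finset.mem_univ i0, ?_⟩
      · exact mul_nonneg (mul_nonneg h1.le (hd i).le) (sq_nonneg _)
      · exact mul_pos (mul_pos h1 (hd i0)) (pow_two_pos_of_ne_zero hi0)
    have hdp : dotProduct (star x) (F.mulVec x) = ∑ i, x i * ∑ j, F i j * x j := by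
      simp [dotProduct, Matrix.mulVec]
    rw [hdp]
    exact lt_of_lt_of_le hpos main
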